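/- arXiv:math/0502375 — 2 statements merged into one kernel-verified Lean document; each statement's English description precedes it below -/
import Mathlib

section
/- Let X be a centered Gaussian random vector in a separable Hilbert space H with Karhunen–Loève expansion X = Σ_{j≥1} λ_j^{1/2} Z_j u_j, where λ_1 ≥ λ_2 ≥ … > 0, {u_j} is orthonormal in H, and Z_j are i.i.d. N(0,1). Fix n, m, l, n_1, …, n_m ∈ ℕ with ∏_{j=1}^m n_j ≤ n, set Z^{(j)} := (Z_{(j−1)l+1}, …, Z_{jl}), let α_j ⊂ ℝ^l be an L²-optimal n_j-quantizer for N(0,I_l) and Ẑ^{(j)} the corresponding Voronoi quantization of Z^{(j)}, and define X̂^n := Σ_{j=1}^m Σ_{k=1}^l λ_{(j−1)l+k}^{1/2} (Ẑ^{(j)})_k u_{(j−1)l+k}. Then E‖X − X̂^n‖² ≤ Σ_{j=1}^m λ_{(j−1)l+1} e_{n_j}(N(0,I_l))² + Σ_{j ≥ ml+1} λ_j; moreover equality holds if l = 1. -/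
open MeasureTheory ProbabilityTheory Filter Real
open scoped RealInnerProductSpace NNReal

/-- The standard Gaussian distribution `N(0, I_l)` on `ℝ^l`. -/
noncomputable def stdGaussianPi (l : ℕ) : MeasureTheory.Measure (Fin l → ℝ) :=
  MeasureTheory.Measure.pi fun _ => ProbabilityTheory.gaussianReal 0 1

/-- The minimal `k`-th `L²`-quantization error of `N(0, I_l)` with respect to the
Euclidean norm on `ℝ^l`. -/
noncomputable def quantErrStdGaussian (l k : ℕ) : ℝ :=
  sInf { r : ℝ | ∃ α : Finset (Fin l → ℝ), α.Nonempty ∧ α.card ≤ k ∧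
    r = (∫ x, sInf ((fun a => ∑ i, (x i - a i) ^ 2) '' (α : Set (Fin l → ℝ)))
          ∂stdGaussianPi l) ^ (1/2 : ℝ) }

section AuxLemmas
open Set
open scoped ENNReal

lemma myHasDeriv (x : ℝ) : HasDerivAt (fun y : ℝ => -(y * Real.exp (-y^2/2)))
    (x^2 * Real.exp (-x^2/2) - Real.exp (-x^2/2)) x := by
  have h1 : HasDerivAt (fun y : ℝ => -y^2/2) (-x) x := by
    have := ((hasDerivAt_pow 2 x).neg).div_const 2
    refine this.congr_deriv ?_
    ring
  have h2 := h1.exp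
  have h3 := (hasDerivAt_id x).mul h2
  have h4 := h3.neg
  refine h4.congr_deriv ?_
  simp
  ring

lemma int_exp_half : ∫ x : ℝ, Real.exp (-x^2/2) = √(2*π) := by
  have := integral_gaussian (1/2)
  rw [show √(π / (1/2)) = √(2*π) by rw [div_div_eq_mul_div, div_one, mul_comm]] at this
  rw [← this]
  congr 1 with x
  ring_nf

lemma integrableOn_sq_exp_Ioi : IntegrableOn (fun x : ℝ => x^2 * Real.exp (-x^2/2)) (Ioi 0) := by
  have h := integrableOn_rpow_mul_exp_neg_mul_sq (b := 1/2) (by norm_num) (s := 2) (by norm_num)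
  refine h.congr_fun (fun x hx => ?_) measurableSet_Ioi
  beta_reduce
  rw [show ((2:ℝ)) = ((2:ℕ):ℝ) by norm_num, Real.rpow_natCast]
  ring_nf


lemma integrable_sq_exp : MeasureTheory.Integrable (fun x : ℝ => x^2 * Real.exp (-x^2/2)) := by
  have hIoi := integrableOn_sq_exp_Ioi
  have hIic : IntegrableOn (fun x : ℝ => x^2 * Real.exp (-x^2/2)) (Iic 0) := by
    rw [← Measure.map_neg_eq_self (volume : Measure ℝ)]
    have m : MeasurableEmbedding fun x : ℝ => -x := (Homeomorph.neg ℝ).measurableEmbedding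
    rw [m.integrableOn_map_iff]
    simp only [Function.comp_def, neg_preimage, neg_Iic, neg_zero]
    refine ((integrableOn_Ici_iff_integrableOn_Ioi (b := 0)).mpr hIoi).congr_fun (fun x _ => ?_) measurableSet_Ici
    ring_nf
  have := hIic.union hIoi
  rwa [Iic_union_Ioi, integrableOn_univ] at this

lemma tendsto_xexp : Tendsto (fun x : ℝ => -(x * Real.exp (-x^2/2))) atTop (nhds 0) := by
  have T := tendsto_rpow_mul_exp_neg_mul_atTop_nhds_zero (1/2) (1/2) (by norm_num)
  have P : Tendsto (fun x : ℝ => x^2) atTop atTop := tendsto_pow_atTop two_ne_zero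
  have C := T.comp P
  have : Tendsto (fun x : ℝ => x * Real.exp (-x^2/2)) atTop (nhds 0) := by
    refine C.congr' ?_
    filter_upwards [eventually_ge_atTop (0:ℝ)] with x hx
    simp only [Function.comp]
    rw [show ((x^2) ^ ((1:ℝ)/2)) = x by
      rw [show (x^2) = x ^ ((2:ℕ):ℝ) by rw [Real.rpow_natCast], ← Real.rpow_mul hx]
      norm_num]
    congr 1
    ring
  simpa using this.neg

lemma int_sq_exp : ∫ x : ℝ, x^2 * Real.exp (-x^2/2) = √(2*π) := by
  have habs : ∫ x : ℝ, x^2 * Real.exp (-x^2/2) = 2 * ∫ x in Ioi (0:ℝ), x^2 * Real.exp (-x^2/2) := by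
    rw [← integral_comp_abs (f := fun x : ℝ => x^2 * Real.exp (-x^2/2))]
    congr 1 with x
    rw [sq_abs]
  have habs2 : ∫ x : ℝ, Real.exp (-x^2/2) = 2 * ∫ x in Ioi (0:ℝ), Real.exp (-x^2/2) := by
    rw [← integral_comp_abs (f := fun x : ℝ => Real.exp (-x^2/2))]
    congr 1 with x
    rw [sq_abs]
  have hee : Integrable (fun x : ℝ => Real.exp (-x^2/2)) := by
    have := integrable_exp_neg_mul_sq (b := (1/2:ℝ)) (by norm_num)
    refine this.congr ?_
    refine Filter.Eventually.of_forall (fun x => ?_)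
    ring_nf
  have key : ∫ x in Ioi (0:ℝ), (x^2 * Real.exp (-x^2/2) - Real.exp (-x^2/2)) = 0 := by
    have := integral_Ioi_of_hasDerivAt_of_tendsto' (f := fun y : ℝ => -(y * Real.exp (-y^2/2)))
      (f' := fun x : ℝ => x^2 * Real.exp (-x^2/2) - Real.exp (-x^2/2)) (a := 0)
      (fun x _ => myHasDeriv x) (integrableOn_sq_exp_Ioi.sub (hee.integrableOn)) tendsto_xexp
    simpa using this
  have hsub := integral_sub integrableOn_sq_exp_Ioi (hee.integrableOn (s := Ioi 0))
  rw [key] at hsub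
  have : ∫ x in Ioi (0:ℝ), x^2 * Real.exp (-x^2/2) = ∫ x in Ioi (0:ℝ), Real.exp (-x^2/2) := by
    linarith [hsub]
  rw [habs, this, ← habs2, int_exp_half]

lemma gaussPDFReal_eq (x : ℝ) :
    gaussianPDFReal 0 1 x = (√(2*π))⁻¹ * Real.exp (-x^2/2) := by
  simp [gaussianPDFReal]

lemma gauss_eq_wd : gaussianReal 0 1 = volume.withDensity
    (fun x => ((gaussianPDFReal 0 1 x).toNNReal : ℝ≥0∞)) := by
  rw [gaussianReal_of_var_ne_zero 0 one_ne_zero]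
  rfl

lemma integrable_sq_gauss : Integrable (fun x : ℝ => x ^ 2) (gaussianReal 0 1) := by
  rw [gauss_eq_wd, integrable_withDensity_iff]
  · refine (integrable_sq_exp.const_mul ((√(2*π))⁻¹)).congr ?_
    refine Filter.Eventually.of_forall (fun x => ?_)
    simp only [ENNReal.coe_toReal]
    rw [Real.coe_toNNReal _ (gaussianPDFReal_nonneg 0 1 x), gaussPDFReal_eq]
    ring
  · exact (measurable_gaussianPDFReal 0 1).real_toNNReal.coe_nnreal_ennreal
  · exact Filter.Eventually.of_forall (fun x => ENNReal.coe_lt_top)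

lemma integral_sq_gauss : ∫ x, x ^ 2 ∂(gaussianReal 0 1) = 1 := by
  rw [gauss_eq_wd,
    integral_withDensity_eq_integral_smul (measurable_gaussianPDFReal 0 1).real_toNNReal]
  have : ∀ x : ℝ, (Real.toNNReal (gaussianPDFReal 0 1 x)) • x ^ 2
      = (√(2*π))⁻¹ * (x^2 * Real.exp (-x^2/2)) := by
    intro x
    rw [NNReal.smul_def, smul_eq_mul, Real.coe_toNNReal _ (gaussianPDFReal_nonneg 0 1 x),
      gaussPDFReal_eq]
    ring
  simp_rw [this]
  rw [integral_const_mul, int_sq_exp, inv_mul_cancel₀]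
  positivity

lemma pythag_hasSum {H : Type*} [NormedAddCommGroup H] [InnerProductSpace ℝ H]
    {u : ℕ → H} (hu : Orthonormal ℝ u) {a : ℕ → ℝ} {v : H}
    (h : HasSum (fun i => a i • u i) v) : HasSum (fun i => a i ^ 2) (‖v‖ ^ 2) := by
  have hcont : Continuous (fun x : H => ‖x‖ ^ 2) := (continuous_norm.pow 2)
  have h2 := (hcont.tendsto v).comp h
  refine h2.congr (fun s => ?_)
  simp only [Function.comp]
  rw [← real_inner_self_eq_norm_sq, hu.inner_sum]
  simp [pow_two]

lemma sum_range_mul_block {M : Type*} [AddCommMonoid M] (f : ℕ → M) (m l : ℕ) :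
    ∑ i ∈ Finset.range (m * l), f i = ∑ j : Fin m, ∑ k : Fin l, f ((j : ℕ) * l + (k : ℕ)) := by
  induction m with
  | zero => simp
  | succ m ih =>
    rw [Nat.succ_mul, Finset.sum_range_add, ih, Fin.sum_univ_castSucc]
    simp [Finset.sum_range]

lemma measurable_finset_inf' {ι α : Type*} [MeasurableSpace α] {s : Finset ι} (hs : s.Nonempty)
    (f : ι → α → ℝ) (hf : ∀ i, Measurable (f i)) :
    Measurable (fun x => s.inf' hs (fun i => f i x)) := by
  induction hs using Finset.Nonempty.cons_induction with
  | singleton i => simpa using hf i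
  | cons i s hi hne ih =>
    have hrw : (fun x => (Finset.cons i s hi).inf' (Finset.cons_nonempty hi) (fun a => f a x))
        = fun x => (f i x) ⊓ (s.inf' hne (fun a => f a x)) := by
      funext x; exact Finset.inf'_cons (f := fun a => f a x) (H := hne)
    rw [hrw]
    exact (hf i).min ih

end AuxLemmas

/-- Lemma 1: for the block quantization `X̂ⁿ` of a centered Gaussian vector
`X = Σ_j √λ_j Z_j u_j` built from `L²`-optimal `n_j`-quantizers of `N(0,I_l)` on the
blocks `Z^{(j)} = (Z_{(j-1)l+1}, …, Z_{jl})`,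
`E‖X - X̂ⁿ‖² ≤ Σ_{j=1}^m λ_{(j-1)l+1} e_{n_j}(N(0,I_l))² + Σ_{j ≥ ml+1} λ_j`,
with equality when `l = 1`. -/
theorem block_quantization_error_bound
    {H : Type*} [NormedAddCommGroup H] [InnerProductSpace ℝ H] [CompleteSpace H]
    {Ω : Type*} [MeasurableSpace Ω] (P : Measure Ω) [IsProbabilityMeasure P]
    -- Karhunen–Loève data: `λ_1 ≥ λ_2 ≥ … > 0`, `u` orthonormal, `Z_j` i.i.d. `N(0,1)`
    (lam : ℕ → ℝ) (hlam_pos : ∀ j, 0 < lam j) (hlam_anti : Antitone lam)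
    (hlam_sum : Summable lam)
    (u : ℕ → H) (hu : Orthonormal ℝ u)
    (Z : ℕ → Ω → ℝ) (hZmeas : ∀ j, Measurable (Z j))
    (hZlaw : ∀ j, Measure.map (Z j) P = gaussianReal 0 1)
    (hZindep : iIndepFun Z P)
    -- `X = Σ_j λ_j^{1/2} Z_j u_j`
    (X : Ω → H)
    (hX : ∀ᵐ ω ∂P, HasSum (fun j => (Real.sqrt (lam j) * Z j ω) • u j) (X ω))
    -- block sizes and quantizer sizes, `∏_j n_j ≤ n`
    (n m l : ℕ) (hm : 1 ≤ m) (hl : 1 ≤ l)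
    (nn : Fin m → ℕ) (hnn : ∀ j, 1 ≤ nn j) (hprod : ∏ j, nn j ≤ n)
    -- `α j` is an `L²`-optimal `n_j`-quantizer of `N(0,I_l)`
    (α : Fin m → Finset (Fin l → ℝ))
    (hcard : ∀ j, (α j).Nonempty ∧ (α j).card ≤ nn j)
    (hopt : ∀ j,
      (∫ x, sInf ((fun a => ∑ i, (x i - a i) ^ 2) '' ((α j : Set (Fin l → ℝ))))
          ∂stdGaussianPi l) ^ (1/2 : ℝ) = quantErrStdGaussian l (nn j))
    -- `q j` is a Voronoi (nearest-neighbour) quantization of the block `Z^{(j)}` by `α j`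
    (q : Fin m → Ω → Fin l → ℝ) (hqmeas : ∀ j, Measurable (q j))
    (hq : ∀ j ω, q j ω ∈ α j ∧
      (∑ i : Fin l, (Z ((j : ℕ) * l + (i : ℕ)) ω - q j ω i) ^ 2)
        = sInf ((fun a => ∑ i : Fin l, (Z ((j : ℕ) * l + (i : ℕ)) ω - a i) ^ 2) ''
            ((α j : Set (Fin l → ℝ)))))
    -- the block quantization `X̂ⁿ`
    (Xhat : Ω → H)
    (hXhat : ∀ ω, Xhat ω = ∑ j : Fin m, ∑ k : Fin l,
        (Real.sqrt (lam ((j : ℕ) * l + (k : ℕ))) * q j ω k) • u ((j : ℕ) * l + (k : ℕ))) :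
    (∫ ω, ‖X ω - Xhat ω‖ ^ 2 ∂P)
        ≤ (∑ j : Fin m, lam ((j : ℕ) * l) * quantErrStdGaussian l (nn j) ^ 2)
          + ∑' i : ℕ, lam (m * l + i)
    ∧ (l = 1 →
      (∫ ω, ‖X ω - Xhat ω‖ ^ 2 ∂P)
        = (∑ j : Fin m, lam ((j : ℕ) * l) * quantErrStdGaussian l (nn j) ^ 2)
          + ∑' i : ℕ, lam (m * l + i)) := by
  classical
  have hl0 : 0 < l := hl
  -- the quantized coefficient process, extended by 0 beyond the first m*l coordinates
  set r : ℕ → Ω → ℝ := fun i ω =>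
    if h : i < m * l then
      q ⟨i / l, (Nat.div_lt_iff_lt_mul hl0).mpr h⟩ ω ⟨i % l, Nat.mod_lt i hl0⟩
    else 0 with hrdef
  have hr_pos : ∀ i (hi : i < m * l) ω,
      r i ω = q ⟨i / l, (Nat.div_lt_iff_lt_mul hl0).mpr hi⟩ ω ⟨i % l, Nat.mod_lt i hl0⟩ := by
    intro i hi ω
    simp only [hrdef]
    rw [dif_pos hi]
  have hr_neg : ∀ i, m * l ≤ i → ∀ ω, r i ω = 0 := by
    intro i hi ω
    simp only [hrdef]
    rw [dif_neg (not_lt.mpr hi)]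
  have r_eq : ∀ (j : Fin m) (k : Fin l) ω, r ((j : ℕ) * l + (k : ℕ)) ω = q j ω k := by
    intro j k ω
    have hik : (j : ℕ) * l + (k : ℕ) < m * l := by
      have h1 : (j : ℕ) * l + (k : ℕ) < ((j : ℕ) + 1) * l := by
        have := k.isLt; nlinarith [k.isLt]
      have h2 : ((j : ℕ) + 1) * l ≤ m * l := Nat.mul_le_mul_right l j.isLt
      omega
    rw [hr_pos _ hik]
    have hdiv : ((j : ℕ) * l + (k : ℕ)) / l = (j : ℕ) := by
      rw [add_comm, mul_comm, Nat.add_mul_div_left _ _ hl0, Nat.div_eq_of_lt k.isLt, zero_add]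
    have hmod : ((j : ℕ) * l + (k : ℕ)) % l = (k : ℕ) := by
      rw [add_comm, mul_comm, Nat.add_mul_mod_self_left, Nat.mod_eq_of_lt k.isLt]
    have e1 : (⟨((j : ℕ) * l + (k : ℕ)) / l,
        (Nat.div_lt_iff_lt_mul hl0).mpr hik⟩ : Fin m) = j := Fin.ext hdiv
    have e2 : (⟨((j : ℕ) * l + (k : ℕ)) % l, Nat.mod_lt _ hl0⟩ : Fin l) = k := Fin.ext hmod
    rw [e1, e2]
  have hrmeas : ∀ i, Measurable (r i) := by
    intro i
    by_cases hi : i < m * l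
    · have : r i = fun ω => q ⟨i / l, (Nat.div_lt_iff_lt_mul hl0).mpr hi⟩ ω
        ⟨i % l, Nat.mod_lt i hl0⟩ := funext fun ω => hr_pos i hi ω
      rw [this]
      exact (measurable_pi_apply _).comp (hqmeas _)
    · have : r i = fun _ => 0 := funext fun ω => hr_neg i (not_lt.mp hi) ω
      rw [this]
      exact measurable_const
  have hrbd : ∀ i, ∃ C : ℝ, ∀ ω, |r i ω| ≤ C := by
    intro i
    by_cases hi : i < m * l
    · refine ⟨(α ⟨i / l, (Nat.div_lt_iff_lt_mul hl0).mpr hi⟩).sup'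
        (hcard _).1 (fun a => |a ⟨i % l, Nat.mod_lt i hl0⟩|), fun ω => ?_⟩
      rw [hr_pos i hi ω]
      exact Finset.le_sup' (fun a => |a ⟨i % l, Nat.mod_lt i hl0⟩|) (hq _ ω).1
    · exact ⟨0, fun ω => by rw [hr_neg i (not_lt.mp hi) ω]; simp⟩
  -- second moments of the Gaussians
  have hZsq_int : ∀ i, Integrable (fun ω => Z i ω ^ 2) P := by
    intro i
    have hmeas : AEStronglyMeasurable (fun x : ℝ => x ^ 2) (Measure.map (Z i) P) :=
      (measurable_id'.pow_const 2).aestronglyMeasurable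
    have h2 : Integrable (fun x : ℝ => x ^ 2) (Measure.map (Z i) P) := by
      rw [hZlaw i]; exact integrable_sq_gauss
    exact (integrable_map_measure hmeas (hZmeas i).aemeasurable).mp h2
  have hZsq_mom : ∀ i, ∫ ω, Z i ω ^ 2 ∂P = 1 := by
    intro i
    rw [← integral_sq_gauss, ← hZlaw i,
      integral_map (hZmeas i).aemeasurable (measurable_id'.pow_const 2).aestronglyMeasurable]
  -- integrability of the squared differences
  have hdiff_int : ∀ i, Integrable (fun ω => (Z i ω - r i ω) ^ 2) P := by
    intro i
    obtain ⟨C, hC⟩ := hrbd i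
    have hmeas : AEStronglyMeasurable (fun ω => (Z i ω - r i ω) ^ 2) P :=
      (((hZmeas i).sub (hrmeas i)).pow_const 2).aestronglyMeasurable
    refine Integrable.mono' (((hZsq_int i).const_mul 2).add (integrable_const (2 * C ^ 2)))
      hmeas ?_
    refine Filter.Eventually.of_forall (fun ω => ?_)
    have h1 := hC ω
    have h2 : (r i ω) ^ 2 ≤ C ^ 2 := by
      obtain ⟨ha, hb⟩ := abs_le.mp h1
      exact sq_le_sq' ha hb
    rw [Real.norm_eq_abs, abs_of_nonneg (sq_nonneg _)]
    simp only [Pi.add_apply]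
    nlinarith [sq_nonneg (Z i ω + r i ω)]
  set D : ℕ → ℝ := fun i => ∫ ω, (Z i ω - r i ω) ^ 2 ∂P with hDdef
  have hD_nonneg : ∀ i, 0 ≤ D i := fun i => integral_nonneg (fun ω => sq_nonneg _)
  have hD_tail : ∀ i, m * l ≤ i → D i = 1 := by
    intro i hi
    have hre : ∀ ω, Z i ω - r i ω = Z i ω := fun ω => by rw [hr_neg i hi ω, sub_zero]
    simp only [hDdef]
    simp_rw [hre]
    exact hZsq_mom i
  -- a.e. expansion of the squared distance
  have hAE : ∀ᵐ ω ∂P, HasSum (fun i => lam i * (Z i ω - r i ω) ^ 2) (‖X ω - Xhat ω‖ ^ 2) := by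
    filter_upwards [hX] with ω hω
    have hz : ∀ i ∉ Finset.range (m * l), (Real.sqrt (lam i) * r i ω) • u i = 0 := by
      intro i hi
      rw [Finset.mem_range, not_lt] at hi
      rw [hr_neg i hi ω]
      simp
    have h2 := hasSum_sum_of_ne_finset_zero (L := SummationFilter.unconditional ℕ) hz
    rw [sum_range_mul_block (fun i => (Real.sqrt (lam i) * r i ω) • u i) m l] at h2
    simp only [r_eq] at h2
    rw [← hXhat ω] at h2
    have h3 := hω.sub h2
    have h4 : HasSum (fun i => (Real.sqrt (lam i) * (Z i ω - r i ω)) • u i) (X ω - Xhat ω) := by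
      have hfg : (fun i => (Real.sqrt (lam i) * (Z i ω - r i ω)) • u i)
          = fun i => (Real.sqrt (lam i) * Z i ω) • u i
            - (Real.sqrt (lam i) * r i ω) • u i := by
        funext i
        rw [← sub_smul]
        congr 1
        ring
      rw [hfg]
      exact h3
    have h5 := pythag_hasSum hu h4
    have hfg2 : (fun i => lam i * (Z i ω - r i ω) ^ 2)
        = fun i => (Real.sqrt (lam i) * (Z i ω - r i ω)) ^ 2 := by
      funext i
      rw [mul_pow, Real.sq_sqrt (hlam_pos i).le]
    rw [hfg2]
    exact h5
  have hintf : ∀ i, Integrable (fun ω => lam i * (Z i ω - r i ω) ^ 2) P :=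
    fun i => (hdiff_int i).const_mul _
  have hintf_val : ∀ i, ∫ ω, lam i * (Z i ω - r i ω) ^ 2 ∂P = lam i * D i :=
    fun i => integral_const_mul _ _
  have hSummable : Summable (fun i => lam i * D i) := by
    refine (summable_nat_add_iff (m * l)).mp ?_
    have hfg : (fun n => lam (n + m * l) * D (n + m * l)) = fun n => lam (n + m * l) := by
      funext n
      rw [hD_tail _ (by omega), mul_one]
    rw [hfg]
    exact (summable_nat_add_iff (m * l)).mpr hlam_sum
  have hInt_eq : ∫ ω, ‖X ω - Xhat ω‖ ^ 2 ∂P = ∑' i, lam i * D i := by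
    have hcongr : (fun ω => ‖X ω - Xhat ω‖ ^ 2)
        =ᵐ[P] fun ω => ∑' i, lam i * (Z i ω - r i ω) ^ 2 := by
      filter_upwards [hAE] with ω hω
      exact hω.tsum_eq.symm
    rw [integral_congr_ae hcongr]
    rw [integral_tsum (fun i => (hintf i).aestronglyMeasurable) ?_]
    · exact tsum_congr fun i => hintf_val i
    · have heach : ∀ i, ∫⁻ ω, ‖lam i * (Z i ω - r i ω) ^ 2‖ₑ ∂P
          = ENNReal.ofReal (lam i * D i) := by
        intro i
        rw [← hintf_val i,
          ofReal_integral_eq_lintegral_ofReal (hintf i)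
            (Filter.Eventually.of_forall fun ω => mul_nonneg (hlam_pos i).le (sq_nonneg _))]
        refine lintegral_congr fun ω => ?_
        rw [← Real.enorm_eq_ofReal (mul_nonneg (hlam_pos i).le (sq_nonneg _))]
      rw [funext heach, ← ENNReal.ofReal_tsum_of_nonneg
        (fun i => mul_nonneg (hlam_pos i).le (hD_nonneg i)) hSummable]
      exact ENNReal.ofReal_ne_top
  have hsplit : ∑' i, lam i * D i
      = (∑ i ∈ Finset.range (m * l), lam i * D i) + ∑' i, lam (m * l + i) := by
    rw [← Summable.sum_add_tsum_nat_add (m * l) hSummable]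
    congr 1
    refine tsum_congr fun i => ?_
    rw [hD_tail _ (by omega), mul_one, add_comm]
  -- per-block distortion identity
  have hblock : ∀ j : Fin m,
      ∑ k : Fin l, D ((j : ℕ) * l + (k : ℕ)) = quantErrStdGaussian l (nn j) ^ 2 := by
    intro j
    have hDval : ∀ k : Fin l, D ((j : ℕ) * l + (k : ℕ))
        = ∫ ω, (Z ((j : ℕ) * l + (k : ℕ)) ω - q j ω k) ^ 2 ∂P := by
      intro k
      simp only [hDdef]
      refine integral_congr_ae (Filter.Eventually.of_forall fun ω => ?_)
      simp only [r_eq]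
    have hint' : ∀ k : Fin l, Integrable (fun ω => (Z ((j : ℕ) * l + (k : ℕ)) ω - q j ω k) ^ 2) P := by
      intro k
      refine (hdiff_int ((j : ℕ) * l + (k : ℕ))).congr
        (Filter.Eventually.of_forall fun ω => ?_)
      simp only [r_eq]
    have h1 : ∑ k : Fin l, D ((j : ℕ) * l + (k : ℕ))
        = ∫ ω, ∑ k : Fin l, (Z ((j : ℕ) * l + (k : ℕ)) ω - q j ω k) ^ 2 ∂P := by
      rw [integral_finset_sum _ (fun k _ => hint' k)]
      exact Finset.sum_congr rfl fun k _ => hDval k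
    have h2 : ∫ ω, ∑ k : Fin l, (Z ((j : ℕ) * l + (k : ℕ)) ω - q j ω k) ^ 2 ∂P
        = ∫ ω, sInf ((fun a => ∑ i : Fin l, (Z ((j : ℕ) * l + (i : ℕ)) ω - a i) ^ 2) ''
            ((α j : Set (Fin l → ℝ)))) ∂P := by
      refine integral_congr_ae (Filter.Eventually.of_forall fun ω => ?_)
      exact (hq j ω).2
    -- change of variables
    set V : Ω → (Fin l → ℝ) := fun ω k => Z ((j : ℕ) * l + (k : ℕ)) ω with hVdef
    have hVmeas : Measurable V := measurable_pi_lambda _ fun k => hZmeas _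
    have hlaw : Measure.map V P = stdGaussianPi l := by
      rw [stdGaussianPi]
      refine (Measure.pi_eq fun s hs => ?_).symm
      rw [Measure.map_apply hVmeas (MeasurableSet.univ_pi hs)]
      have hpre : V ⁻¹' (Set.univ.pi s) = ⋂ k : Fin l, Z ((j : ℕ) * l + (k : ℕ)) ⁻¹' s k := by
        ext ω
        simp [hVdef, Set.mem_univ_pi]
      rw [hpre]
      set t : ℕ → Set ℝ := fun i =>
        if h : ∃ k : Fin l, (j : ℕ) * l + (k : ℕ) = i then s h.choose else Set.univ with htdef
      have htval : ∀ k : Fin l, t ((j : ℕ) * l + (k : ℕ)) = s k := by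
        intro k
        have hex : ∃ k' : Fin l, (j : ℕ) * l + (k' : ℕ) = (j : ℕ) * l + (k : ℕ) := ⟨k, rfl⟩
        simp only [htdef]
        rw [dif_pos hex]
        have hspec := hex.choose_spec
        exact congrArg s (Fin.ext (Nat.add_left_cancel hspec))
      have htmeas : ∀ i, MeasurableSet (t i) := by
        intro i
        simp only [htdef]
        split
        · exact hs _
        · exact MeasurableSet.univ
      have hinj : Function.Injective (fun k : Fin l => (j : ℕ) * l + (k : ℕ)) := by
        intro a b hab
        simp only at hab
        exact Fin.ext (Nat.add_left_cancel hab)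
      have hbi : (⋂ k : Fin l, Z ((j : ℕ) * l + (k : ℕ)) ⁻¹' s k)
          = ⋂ i ∈ Finset.image (fun k : Fin l => (j : ℕ) * l + (k : ℕ)) Finset.univ,
              Z i ⁻¹' t i := by
        ext ω
        simp only [Set.mem_iInter, Set.mem_preimage, Finset.mem_image, Finset.mem_univ, true_and]
        constructor
        · rintro h i ⟨k, rfl⟩
          rw [htval k]
          exact h k
        · intro h k
          have := h _ ⟨k, rfl⟩
          rwa [htval k] at this
      rw [hbi, hZindep.measure_inter_preimage_eq_mul _ (fun i _ => htmeas i),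
        Finset.prod_image (fun a _ b _ hab => hinj hab)]
      refine Finset.prod_congr rfl fun k _ => ?_
      rw [htval k, ← hZlaw ((j : ℕ) * l + (k : ℕ)),
        Measure.map_apply (hZmeas _) (hs k)]
    have hFmeas : Measurable (fun x : Fin l → ℝ =>
        sInf ((fun a => ∑ i : Fin l, (x i - a i) ^ 2) '' ((α j : Set (Fin l → ℝ))))) := by
      have hfeq : (fun x : Fin l → ℝ =>
          sInf ((fun a => ∑ i : Fin l, (x i - a i) ^ 2) '' ((α j : Set (Fin l → ℝ)))))
          = fun x => (α j).inf' (hcard j).1 (fun a => ∑ i : Fin l, (x i - a i) ^ 2) := by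
        funext x
        rw [Finset.inf'_eq_csInf_image]
      rw [hfeq]
      exact measurable_finset_inf' (hcard j).1 _
        (fun a => Finset.measurable_sum _
          (fun i _ => ((measurable_pi_apply i).sub measurable_const).pow_const 2))
    have h3 : ∫ ω, sInf ((fun a => ∑ i : Fin l, (Z ((j : ℕ) * l + (i : ℕ)) ω - a i) ^ 2) ''
            ((α j : Set (Fin l → ℝ)))) ∂P
        = ∫ x, sInf ((fun a => ∑ i : Fin l, (x i - a i) ^ 2) '' ((α j : Set (Fin l → ℝ))))
            ∂stdGaussianPi l := by
      rw [← hlaw, integral_map hVmeas.aemeasurable hFmeas.aestronglyMeasurable]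
    have h0 : 0 ≤ ∫ x, sInf ((fun a => ∑ i : Fin l, (x i - a i) ^ 2) ''
        ((α j : Set (Fin l → ℝ)))) ∂stdGaussianPi l := by
      refine integral_nonneg fun x => ?_
      refine Real.sInf_nonneg ?_
      rintro y ⟨a, _, rfl⟩
      exact Finset.sum_nonneg fun i _ => sq_nonneg _
    have h4 : quantErrStdGaussian l (nn j) ^ 2
        = ∫ x, sInf ((fun a => ∑ i : Fin l, (x i - a i) ^ 2) '' ((α j : Set (Fin l → ℝ))))
            ∂stdGaussianPi l := by
      rw [← hopt j, ← Real.rpow_natCast (_ ^ (1/2 : ℝ)) 2, ← Real.rpow_mul h0]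
      norm_num
    rw [h1, h2, h3, ← h4]
  -- main chain
  have hchain : ∫ ω, ‖X ω - Xhat ω‖ ^ 2 ∂P
      = (∑ j : Fin m, ∑ k : Fin l, lam ((j : ℕ) * l + (k : ℕ)) * D ((j : ℕ) * l + (k : ℕ)))
        + ∑' i, lam (m * l + i) := by
    rw [hInt_eq, hsplit, sum_range_mul_block (fun i => lam i * D i) m l]
  constructor
  · rw [hchain]
    refine add_le_add_left (Finset.sum_le_sum fun j _ => ?_) _
    calc ∑ k : Fin l, lam ((j : ℕ) * l + (k : ℕ)) * D ((j : ℕ) * l + (k : ℕ))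
        ≤ ∑ k : Fin l, lam ((j : ℕ) * l) * D ((j : ℕ) * l + (k : ℕ)) := by
          refine Finset.sum_le_sum fun k _ => ?_
          exact mul_le_mul_of_nonneg_right (hlam_anti (Nat.le_add_right _ _)) (hD_nonneg _)
      _ = lam ((j : ℕ) * l) * ∑ k : Fin l, D ((j : ℕ) * l + (k : ℕ)) := by
          rw [Finset.mul_sum]
      _ = lam ((j : ℕ) * l) * quantErrStdGaussian l (nn j) ^ 2 := by rw [hblock j]
  · intro hl1
    subst hl1
    rw [hchain]
    congr 1
    refine Finset.sum_congr rfl fun j _ => ?_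
    rw [← hblock j, Fin.sum_univ_one, Fin.sum_univ_one]
    simp
end

section
/- Let λ_1 ≥ λ_2 ≥ … > 0, let n, m, l ∈ ℕ, and set n_j := ⌊n^{1/m} λ_{(j−1)l+1}^{l/2} (∏_{i=1}^m λ_{(i−1)l+1})^{−l/(2m)}⌋ for j = 1, …, m. Assume n^{1/m} λ_{(m−1)l+1}^{l/2} (∏_{i=1}^m λ_{(i−1)l+1})^{−l/(2m)} ≥ 1 (so that n_j ≥ 1 for all j ≤ m). Then Σ_{j=1}^m λ_{(j−1)l+1} n_j^{−2/l} ≤ 4^{1/l} · m · n^{−2/(ml)} · (∏_{j=1}^m λ_{(j−1)l+1})^{1/m} ≤ 4^{1/l} · m · λ_{(m−1)l+1}. -/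
open Finset Real

/-- The allocation estimate: with
`n_j = ⌊n^{1/m} λ_{(j-1)l+1}^{l/2} (∏_{i=1}^m λ_{(i-1)l+1})^{-l/(2m)}⌋` (all `≥ 1`),
`Σ_{j=1}^m λ_{(j-1)l+1} n_j^{-2/l} ≤ 4^{1/l} m n^{-2/(ml)} (∏_{j=1}^m λ_{(j-1)l+1})^{1/m}
≤ 4^{1/l} m λ_{(m-1)l+1}`. -/
theorem optimal_allocation_estimate
    (lam : ℕ → ℝ) (hlam_pos : ∀ j, 0 < lam j) (hlam_anti : Antitone lam)
    (n m l : ℕ) (hn : 1 ≤ n) (hm : 1 ≤ m) (hl : 1 ≤ l)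
    (nj : ℕ → ℕ)
    (hnj : ∀ j : ℕ, nj j = ⌊(n : ℝ) ^ ((1 : ℝ)/m) * lam (j * l) ^ ((l : ℝ)/2) *
      (∏ i ∈ Finset.range m, lam (i * l)) ^ (-((l : ℝ)/(2 * m)))⌋₊)
    (hge1 : 1 ≤ (n : ℝ) ^ ((1 : ℝ)/m) * lam ((m - 1) * l) ^ ((l : ℝ)/2) *
      (∏ i ∈ Finset.range m, lam (i * l)) ^ (-((l : ℝ)/(2 * m)))) :
    (∑ j ∈ Finset.range m, lam (j * l) * (nj j : ℝ) ^ (-(2 : ℝ)/l))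
        ≤ (4 : ℝ) ^ ((1 : ℝ)/l) * m * (n : ℝ) ^ (-(2 : ℝ)/(m * l)) *
            (∏ j ∈ Finset.range m, lam (j * l)) ^ ((1 : ℝ)/m)
    ∧ (4 : ℝ) ^ ((1 : ℝ)/l) * m * (n : ℝ) ^ (-(2 : ℝ)/(m * l)) *
          (∏ j ∈ Finset.range m, lam (j * l)) ^ ((1 : ℝ)/m)
        ≤ (4 : ℝ) ^ ((1 : ℝ)/l) * m * lam ((m - 1) * l) := by
  have hm0 : (m : ℝ) ≠ 0 := by positivity
  have hl0 : (l : ℝ) ≠ 0 := by positivity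
  have hn0 : (0 : ℝ) < n := by exact_mod_cast hn
  set P := ∏ i ∈ Finset.range m, lam (i * l) with hPdef
  have hP : 0 < P := Finset.prod_pos (fun i _ => hlam_pos _)
  -- the key rpow computation
  have hcomp : ∀ L : ℝ, 0 < L →
      ((n : ℝ) ^ ((1 : ℝ)/m) * L ^ ((l : ℝ)/2) * P ^ (-((l : ℝ)/(2 * m)))) ^ (-(2 : ℝ)/l)
        = (n : ℝ) ^ (-(2 : ℝ)/(m * l)) * L⁻¹ * P ^ ((1 : ℝ)/m) := by
    intro L hL
    rw [Real.mul_rpow (by positivity) (by positivity),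
        Real.mul_rpow (by positivity) (by positivity),
        ← Real.rpow_mul (Nat.cast_nonneg n), ← Real.rpow_mul hL.le,
        ← Real.rpow_mul hP.le,
        show (1 : ℝ)/m * (-(2 : ℝ)/l) = -(2 : ℝ)/(m * l) by field_simp,
        show ((l : ℝ)/2) * (-(2 : ℝ)/l) = -1 by field_simp,
        show (-((l : ℝ)/(2 * m))) * (-(2 : ℝ)/l) = (1 : ℝ)/m by field_simp,
        Real.rpow_neg_one]
  -- x_j ≥ 1 for j < m
  have hx1 : ∀ j < m, (1 : ℝ) ≤
      (n : ℝ) ^ ((1 : ℝ)/m) * lam (j * l) ^ ((l : ℝ)/2) * P ^ (-((l : ℝ)/(2 * m))) := by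
    intro j hj
    refine le_trans hge1 ?_
    have hmono : lam ((m - 1) * l) ≤ lam (j * l) :=
      hlam_anti (Nat.mul_le_mul_right l (by omega))
    have : lam ((m - 1) * l) ^ ((l : ℝ)/2) ≤ lam (j * l) ^ ((l : ℝ)/2) :=
      Real.rpow_le_rpow (hlam_pos _).le hmono (by positivity)
    have hA : (0 : ℝ) < (n : ℝ) ^ ((1 : ℝ)/m) := by positivity
    have hB : (0 : ℝ) < P ^ (-((l : ℝ)/(2 * m))) := by positivity
    nlinarith [Real.rpow_pos_of_pos (hlam_pos ((m-1)*l)) ((l : ℝ)/2)]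
  have h4 : (4 : ℝ) ^ ((1 : ℝ)/l) = (2 : ℝ) ^ ((2 : ℝ)/l) := by
    rw [show (4 : ℝ) = (2 : ℝ) ^ (2 : ℝ) by
          rw [show (2:ℝ) = ((2:ℕ):ℝ) by norm_num, Real.rpow_natCast]; norm_num,
        ← Real.rpow_mul (by norm_num)]
    norm_num [div_eq_mul_inv]
  have hkey : ∀ j ∈ Finset.range m,
      lam (j * l) * (nj j : ℝ) ^ (-(2 : ℝ)/l) ≤
        (4 : ℝ) ^ ((1 : ℝ)/l) * ((n : ℝ) ^ (-(2 : ℝ)/(m * l)) * P ^ ((1 : ℝ)/m)) := by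
    intro j hj
    rw [Finset.mem_range] at hj
    set x := (n : ℝ) ^ ((1 : ℝ)/m) * lam (j * l) ^ ((l : ℝ)/2) * P ^ (-((l : ℝ)/(2 * m)))
      with hxdef
    have hx : (1 : ℝ) ≤ x := hx1 j hj
    have hxpos : (0 : ℝ) < x := lt_of_lt_of_le one_pos hx
    have hnj1 : 1 ≤ nj j := by
      rw [hnj j]
      have h1x : ((1 : ℕ) : ℝ) ≤ x := by rw [Nat.cast_one]; exact hx
      exact Nat.le_floor h1x
    have hfl : x ≤ 2 * (nj j : ℝ) := by
      have h1 := Nat.lt_floor_add_one x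
      have h2 : (1 : ℝ) ≤ (nj j : ℝ) := by exact_mod_cast hnj1
      rw [hnj j]
      rw [hnj j] at h2
      linarith
    have hhalf : (0 : ℝ) < x / 2 := by linarith
    have h1 : ((nj j : ℝ)) ^ (-(2 : ℝ)/l) ≤ (x / 2) ^ (-(2 : ℝ)/l) :=
      Real.rpow_le_rpow_of_nonpos hhalf (by linarith) (by { apply div_nonpos_of_nonpos_of_nonneg <;> norm_num })
    have h2 : (x / 2) ^ (-(2 : ℝ)/l) = x ^ (-(2 : ℝ)/l) * (2 : ℝ) ^ ((2 : ℝ)/l) := by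
      rw [Real.div_rpow hxpos.le (by norm_num), div_eq_mul_inv, ← Real.rpow_neg (by norm_num)]
      ring_nf
    have h3 : x ^ (-(2 : ℝ)/l) = (n : ℝ) ^ (-(2 : ℝ)/(m * l)) * (lam (j * l))⁻¹ *
        P ^ ((1 : ℝ)/m) := hcomp _ (hlam_pos _)
    calc lam (j * l) * (nj j : ℝ) ^ (-(2 : ℝ)/l)
        ≤ lam (j * l) * ((x / 2) ^ (-(2 : ℝ)/l)) :=
          mul_le_mul_of_nonneg_left h1 (hlam_pos _).le
      _ = (2 : ℝ) ^ ((2 : ℝ)/l) * ((n : ℝ) ^ (-(2 : ℝ)/(m * l)) * P ^ ((1 : ℝ)/m)) *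
          (lam (j * l) * (lam (j * l))⁻¹) := by rw [h2, h3]; ring
      _ = (4 : ℝ) ^ ((1 : ℝ)/l) * ((n : ℝ) ^ (-(2 : ℝ)/(m * l)) * P ^ ((1 : ℝ)/m)) := by
          rw [mul_inv_cancel₀ (hlam_pos _).ne', h4, mul_one]
    -- done
  constructor
  · calc (∑ j ∈ Finset.range m, lam (j * l) * (nj j : ℝ) ^ (-(2 : ℝ)/l))
        ≤ ∑ _j ∈ Finset.range m,
            (4 : ℝ) ^ ((1 : ℝ)/l) * ((n : ℝ) ^ (-(2 : ℝ)/(m * l)) * P ^ ((1 : ℝ)/m)) :=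
          Finset.sum_le_sum hkey
      _ = (4 : ℝ) ^ ((1 : ℝ)/l) * m * (n : ℝ) ^ (-(2 : ℝ)/(m * l)) * P ^ ((1 : ℝ)/m) := by
          rw [Finset.sum_const, Finset.card_range, nsmul_eq_mul]; ring
  · have hy : (n : ℝ) ^ (-(2 : ℝ)/(m * l)) * (lam ((m - 1) * l))⁻¹ * P ^ ((1 : ℝ)/m) ≤ 1 := by
      rw [← hcomp _ (hlam_pos _)]
      exact Real.rpow_le_one_of_one_le_of_nonpos hge1 (by { apply div_nonpos_of_nonpos_of_nonneg <;> norm_num })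
    have hL := hlam_pos ((m - 1) * l)
    have h5 : (n : ℝ) ^ (-(2 : ℝ)/(m * l)) * P ^ ((1 : ℝ)/m) ≤ lam ((m - 1) * l) := by
      have := mul_le_mul_of_nonneg_left hy hL.le
      rw [mul_one] at this
      calc (n : ℝ) ^ (-(2 : ℝ)/(m * l)) * P ^ ((1 : ℝ)/m)
          = lam ((m - 1) * l) * ((n : ℝ) ^ (-(2 : ℝ)/(m * l)) * (lam ((m - 1) * l))⁻¹ *
            P ^ ((1 : ℝ)/m)) := by field_simp
        _ ≤ lam ((m - 1) * l) := this
    have h6 : (0 : ℝ) ≤ (4 : ℝ) ^ ((1 : ℝ)/l) * m := by positivity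
    calc (4 : ℝ) ^ ((1 : ℝ)/l) * m * (n : ℝ) ^ (-(2 : ℝ)/(m * l)) * P ^ ((1 : ℝ)/m)
        = (4 : ℝ) ^ ((1 : ℝ)/l) * m * ((n : ℝ) ^ (-(2 : ℝ)/(m * l)) * P ^ ((1 : ℝ)/m)) := by
          ring
      _ ≤ (4 : ℝ) ^ ((1 : ℝ)/l) * m * lam ((m - 1) * l) :=
          mul_le_mul_of_nonneg_left h5 h6
end
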